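/- arXiv:1610.08499 — 4 statements merged into one kernel-verified Lean document; each statement's English description precedes it below -/
import Mathlib

section
/- Let λ₀, μ₀ ∈ ℝ with μ₀ > 0 and λ₀ + 2μ₀ > 0, and let Γ be the two-dimensional Kelvin matrix. Then each column of Γ solves the homogeneous elastostatic (Lamé) system away from the origin: for every x ∈ ℝ² \ {0} and all indices j, k ∈ {1,2}, μ₀·Σ_{i=1}^{2} ∂²γ_{kj}/∂x_i²(x) + (λ₀ + μ₀)·∂/∂x_k ( Σ_{i=1}^{2} ∂γ_{ij}/∂x_i (x) ) = 0. -/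
set_option maxHeartbeats 2000000


/-- Partial derivative in the `i`-th coordinate direction of a scalar field on `ℝ²`. -/
noncomputable def pd2 (i : Fin 2) (f : EuclideanSpace ℝ (Fin 2) → ℝ)
    (x : EuclideanSpace ℝ (Fin 2)) : ℝ :=
  fderiv ℝ f x (EuclideanSpace.single i 1)

/-- Entry `γ_{ij}` of the two-dimensional Kelvin matrix:
`γ_{ij}(x) = α δ_{ij} ln|x| − β x_i x_j / |x|²`. -/
noncomputable def kelvin2 (α β : ℝ) (i j : Fin 2) (x : EuclideanSpace ℝ (Fin 2)) : ℝ :=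
  α * (if i = j then (1 : ℝ) else 0) * Real.log ‖x‖ - β * x i * x j / ‖x‖ ^ 2

namespace KelvinAux

abbrev E2 := EuclideanSpace ℝ (Fin 2)

def dd (a b : Fin 2) : ℝ := if a = b then 1 else 0

def Q (y : E2) : ℝ := y 0 * y 0 + y 1 * y 1

lemma pd2_eval {f : E2 → ℝ} {D : E2 →L[ℝ] ℝ} {x : E2} (h : HasFDerivAt f D x) (l : Fin 2) :
    pd2 l f x = D (EuclideanSpace.single l 1) := by rw [pd2, h.fderiv]

lemma hcoord (a : Fin 2) (y : E2) :
    HasFDerivAt (fun y : E2 => y a) (EuclideanSpace.proj (𝕜 := ℝ) a) y :=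
  (EuclideanSpace.proj (𝕜 := ℝ) a).hasFDerivAt

lemma hQ (y : E2) : HasFDerivAt Q
    ((2 * y 0) • EuclideanSpace.proj (𝕜 := ℝ) 0 + (2 * y 1) • EuclideanSpace.proj (𝕜 := ℝ) 1) y := by
  have h := ((hcoord 0 y).mul (hcoord 0 y)).add ((hcoord 1 y).mul (hcoord 1 y))
  refine h.congr_fderiv ?_
  ext v
  simp
  ring

lemma norm_eq_sqrtQ (y : E2) : ‖y‖ = Real.sqrt (Q y) := by
  rw [EuclideanSpace.norm_eq, Fin.sum_univ_two]
  simp [Q, Real.norm_eq_abs, sq, abs_mul_abs_self]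

lemma Q_nonneg (y : E2) : 0 ≤ Q y := by
  have := mul_self_nonneg (y 0); have := mul_self_nonneg (y 1); unfold Q; linarith

lemma Q_pos {y : E2} (hy : y ≠ 0) : 0 < Q y := by
  have h : 0 < ‖y‖ := norm_pos_iff.mpr hy
  have := norm_eq_sqrtQ y
  nlinarith [Real.sq_sqrt (Q_nonneg y), Real.sqrt_nonneg (Q y)]

lemma normsq (y : E2) : ‖y‖ ^ 2 = Q y := by
  rw [norm_eq_sqrtQ, Real.sq_sqrt (Q_nonneg y)]

lemma kelvin_eq (α β : ℝ) (i j : Fin 2) :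
    kelvin2 α β i j = fun y => (α * dd i j / 2) * Real.log (Q y)
      - β * (y i * y j * (Q y)⁻¹) := by
  funext y
  rw [kelvin2, norm_eq_sqrtQ, Real.log_sqrt (Q_nonneg y), Real.sq_sqrt (Q_nonneg y)]
  unfold dd
  ring

/-- explicit first-derivative formula -/
noncomputable def Gfun (α β : ℝ) (i j m : Fin 2) (y : E2) : ℝ :=
  α * dd i j * (y m * (Q y)⁻¹)
    - β * (dd i m * (y j * (Q y)⁻¹) + dd j m * (y i * (Q y)⁻¹))
    + 2 * β * (y i * y j * y m * ((Q y)⁻¹ * (Q y)⁻¹))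

lemma pd2_kelvin (α β : ℝ) (i j m : Fin 2) {y : E2} (hy : y ≠ 0) :
    pd2 m (kelvin2 α β i j) y = Gfun α β i j m y := by
  have hQne : Q y ≠ 0 := (Q_pos hy).ne'
  have hinv := (hasDerivAt_inv hQne).comp_hasFDerivAt y (hQ y)
  have hlog := (Real.hasDerivAt_log hQne).comp_hasFDerivAt y (hQ y)
  have h1 := hlog.const_mul (α * dd i j / 2)
  have h2 := (((hcoord i y).mul (hcoord j y)).mul hinv).const_mul β
  have hK := h1.sub h2
  rw [kelvin_eq]
  refine Eq.trans (pd2_eval hK m) ?_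
  simp only [ContinuousLinearMap.sub_apply, ContinuousLinearMap.add_apply,
    ContinuousLinearMap.smul_apply, PiLp.proj_apply, EuclideanSpace.single_apply,
    smul_eq_mul, Gfun]
  clear hK h1 h2 hinv hlog
  fin_cases m <;> simp [dd] <;> split_ifs <;> field_simp <;> ring

lemma hGfun {x : E2} (hx : x ≠ 0) (α β : ℝ) (i j m : Fin 2) :
    ∃ D : E2 →L[ℝ] ℝ, HasFDerivAt (Gfun α β i j m) D x ∧
      ∀ l : Fin 2, D (EuclideanSpace.single l 1) =
        α * dd i j * (dd m l * (Q x)⁻¹ - 2 * x m * x l * ((Q x) ^ 2)⁻¹)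
          - β * (dd i m * (dd j l * (Q x)⁻¹ - 2 * x j * x l * ((Q x) ^ 2)⁻¹)
               + dd j m * (dd i l * (Q x)⁻¹ - 2 * x i * x l * ((Q x) ^ 2)⁻¹))
          + 2 * β * ((dd i l * x j * x m + dd j l * x i * x m + dd m l * x i * x j) * ((Q x) ^ 2)⁻¹
               - 4 * x i * x j * x m * x l * ((Q x) ^ 3)⁻¹) := by
  have hQne : Q x ≠ 0 := (Q_pos hx).ne'
  have hinv := (hasDerivAt_inv hQne).comp_hasFDerivAt x (hQ x)
  have h1 := ((hcoord m x).mul hinv).const_mul (α * dd i j)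
  have h2 := ((((hcoord j x).mul hinv).const_mul (dd i m)).add
    (((hcoord i x).mul hinv).const_mul (dd j m))).const_mul β
  have h3 := ((((hcoord i x).mul ((hcoord j x))).mul (hcoord m x)).mul
    (hinv.mul hinv)).const_mul (2 * β)
  have hG := (h1.sub h2).add h3
  refine ⟨_, hG, fun l => ?_⟩
  simp only [ContinuousLinearMap.sub_apply, ContinuousLinearMap.add_apply,
    ContinuousLinearMap.smul_apply, PiLp.proj_apply, EuclideanSpace.single_apply,
    smul_eq_mul]
  clear hG h1 h2 h3 hinv
  fin_cases i <;> fin_cases j <;> fin_cases m <;> fin_cases l <;>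
    simp [dd] <;> field_simp <;> ring

lemma G_diff {x : E2} (hx : x ≠ 0) (α β : ℝ) (i j m : Fin 2) :
    DifferentiableAt ℝ (Gfun α β i j m) x := by
  obtain ⟨D, hD, -⟩ := hGfun hx α β i j m
  exact hD.differentiableAt

lemma pd2_G {x : E2} (hx : x ≠ 0) (α β : ℝ) (i j m l : Fin 2) :
    pd2 l (Gfun α β i j m) x =
      α * dd i j * (dd m l * (Q x)⁻¹ - 2 * x m * x l * ((Q x) ^ 2)⁻¹)
        - β * (dd i m * (dd j l * (Q x)⁻¹ - 2 * x j * x l * ((Q x) ^ 2)⁻¹)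
             + dd j m * (dd i l * (Q x)⁻¹ - 2 * x i * x l * ((Q x) ^ 2)⁻¹))
        + 2 * β * ((dd i l * x j * x m + dd j l * x i * x m + dd m l * x i * x j) * ((Q x) ^ 2)⁻¹
             - 4 * x i * x j * x m * x l * ((Q x) ^ 3)⁻¹) := by
  obtain ⟨D, hD, hval⟩ := hGfun hx α β i j m
  exact (pd2_eval hD l).trans (hval l)

lemma pd2_pd2 {x : E2} (hx : x ≠ 0) (α β : ℝ) (i j m l : Fin 2) :
    pd2 l (fun y => pd2 m (kelvin2 α β i j) y) x = pd2 l (Gfun α β i j m) x := by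
  have hev : (fun y => pd2 m (kelvin2 α β i j) y) =ᶠ[nhds x] Gfun α β i j m := by
    filter_upwards [eventually_ne_nhds hx] with y hy using pd2_kelvin α β i j m hy
  exact congrArg (fun D : E2 →L[ℝ] ℝ => D (EuclideanSpace.single l 1)) hev.fderiv_eq

lemma pd2_div {x : E2} (hx : x ≠ 0) (α β : ℝ) (j k : Fin 2) :
    pd2 k (fun y => ∑ i, pd2 i (kelvin2 α β i j) y) x
      = pd2 k (Gfun α β 0 j 0) x + pd2 k (Gfun α β 1 j 1) x := by
  have hev : (fun y => ∑ i, pd2 i (kelvin2 α β i j) y)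
      =ᶠ[nhds x] (fun y => Gfun α β 0 j 0 y + Gfun α β 1 j 1 y) := by
    filter_upwards [eventually_ne_nhds hx] with y hy
    rw [Fin.sum_univ_two, pd2_kelvin α β 0 j 0 hy, pd2_kelvin α β 1 j 1 hy]
  have h2 := hev.fderiv_eq (𝕜 := ℝ)
  have h3 := fderiv_add (𝕜 := ℝ) (G_diff hx α β 0 j 0) (G_diff hx α β 1 j 1)
  have h4 := congrArg (fun D : E2 →L[ℝ] ℝ => D (EuclideanSpace.single k 1)) (h2.trans h3)
  exact h4.trans (by simp only [ContinuousLinearMap.add_apply]; rfl)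

end KelvinAux

open KelvinAux in
open KelvinAux in
theorem kelvin2_solves_lame
    (l0 m0 : ℝ) (hm : 0 < m0) (hl : 0 < l0 + 2 * m0)
    (α β : ℝ)
    (hα : α = (l0 + 3 * m0) / (4 * Real.pi * m0 * (l0 + 2 * m0)))
    (hβ : β = (l0 + m0) / (4 * Real.pi * m0 * (l0 + 2 * m0)))
    (x : EuclideanSpace ℝ (Fin 2)) (hx : x ≠ 0) (j k : Fin 2) :
    m0 * (∑ i, pd2 i (fun y => pd2 i (kelvin2 α β k j) y) x)
      + (l0 + m0) * pd2 k (fun y => ∑ i, pd2 i (kelvin2 α β i j) y) x = 0 := by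
  have hQne : Q x ≠ 0 := (Q_pos hx).ne'
  rw [Fin.sum_univ_two, pd2_pd2 hx α β k j 0 0, pd2_pd2 hx α β k j 1 1,
    pd2_div hx α β j k, pd2_G hx, pd2_G hx, pd2_G hx, pd2_G hx]
  have hQ : Q x = x 0 * x 0 + x 1 * x 1 := rfl
  have hQne' : x 0 * x 0 + x 1 * x 1 ≠ 0 := hQ ▸ hQne
  subst hα hβ
  have hx0 : ∀ h : 0 < 2, x ⟨0, h⟩ = x 0 := fun _ => rfl
  have hx1 : ∀ h : 1 < 2, x ⟨1, h⟩ = x 1 := fun _ => rfl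
  fin_cases j <;> fin_cases k <;>
    norm_num [dd, hQ, hx0, hx1] <;>
    field_simp [hm.ne', hl.ne', Real.pi_ne_zero] <;> ring
end

section
/- Let λ₀, μ₀ ∈ ℝ with μ₀ > 0 and λ₀ + 2μ₀ > 0, and let Γ be the two-dimensional Kelvin matrix. Then for all x, y ∈ ℝ² with x ≠ y and all i, j, k ∈ {1,2}, the partial derivative of the entry γ_{ij}(x − y) with respect to y_k equals −α·δ_{ij}·(x_k−y_k)/|x−y|² + β·δ_{ik}·(x_j−y_j)/|x−y|² + β·δ_{jk}·(x_i−y_i)/|x−y|² − 2β·(x_i−y_i)(x_j−y_j)(x_k−y_k)/|x−y|⁴. -/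
theorem kelvin2_first_derivative
    (l0 m0 : ℝ) (hm : 0 < m0) (hl : 0 < l0 + 2 * m0)
    (α β : ℝ)
    (hα : α = (l0 + 3 * m0) / (4 * Real.pi * m0 * (l0 + 2 * m0)))
    (hβ : β = (l0 + m0) / (4 * Real.pi * m0 * (l0 + 2 * m0)))
    (x y : EuclideanSpace ℝ (Fin 2)) (hxy : x ≠ y) (i j k : Fin 2) :
    pd2 k (fun z => kelvin2 α β i j (x - z)) y =
      -α * (if i = j then (1 : ℝ) else 0) * (x k - y k) / ‖x - y‖ ^ 2
        + β * (if i = k then (1 : ℝ) else 0) * (x j - y j) / ‖x - y‖ ^ 2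
        + β * (if j = k then (1 : ℝ) else 0) * (x i - y i) / ‖x - y‖ ^ 2
        - 2 * β * (x i - y i) * (x j - y j) * (x k - y k) / ‖x - y‖ ^ 4 := by
  classical
  set c : ℝ := if i = j then (1:ℝ) else 0 with hc
  have hvne : x - y ≠ 0 := sub_ne_zero.mpr hxy
  have hn : ‖x - y‖ ≠ 0 := norm_ne_zero_iff.mpr hvne
  have hn2 : ‖x - y‖ ^ 2 ≠ 0 := pow_ne_zero _ hn
  have hA : HasFDerivAt (fun z : EuclideanSpace ℝ (Fin 2) => x - z)
      (-(ContinuousLinearMap.id ℝ _)) y := (hasFDerivAt_id y).const_sub x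
  have hq : HasFDerivAt (fun z : EuclideanSpace ℝ (Fin 2) => ‖x - z‖ ^ 2)
      ((-2 : ℝ) • (innerSL ℝ (x - y))) y := by
    have h1 := (hA.inner ℝ hA)
    have h2 : (fun z : EuclideanSpace ℝ (Fin 2) => (inner ℝ (x - z) (x - z) : ℝ))
        = fun z => ‖x - z‖ ^ 2 := by
      funext z; rw [real_inner_self_eq_norm_sq]
    rw [h2] at h1
    refine h1.congr_fderiv ?_
    ext h
    simp [fderivInnerCLM_apply, real_inner_comm]
    rw [real_inner_comm (x - y) h, inner_sub_left]; ring
  have hpi : ∀ t : Fin 2, HasFDerivAt (fun z : EuclideanSpace ℝ (Fin 2) => (x - z) t)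
      (-(EuclideanSpace.proj t : EuclideanSpace ℝ (Fin 2) →L[ℝ] ℝ)) y := by
    intro t
    have h1 := (EuclideanSpace.proj t : EuclideanSpace ℝ (Fin 2) →L[ℝ] ℝ).hasFDerivAt.comp y hA
    exact h1.congr_fderiv (by ext h; simp)
  have hlog : HasFDerivAt (fun z : EuclideanSpace ℝ (Fin 2) => Real.log (‖x - z‖ ^ 2))
      ((‖x - y‖ ^ 2)⁻¹ • ((-2 : ℝ) • (innerSL ℝ (x - y)))) y := hq.log hn2
  have hinv : HasFDerivAt (fun z : EuclideanSpace ℝ (Fin 2) => (‖x - z‖ ^ 2)⁻¹)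
      ((-((‖x - y‖ ^ 2) ^ 2)⁻¹) • ((-2 : ℝ) • (innerSL ℝ (x - y)))) y :=
    (hasDerivAt_inv hn2).comp_hasFDerivAt y hq
  have Hnum := ((hpi i).const_mul β).mul (hpi j)
  have Hf := (hlog.const_mul (α * c / 2)).sub (Hnum.mul hinv)
  have hfun : (fun z => kelvin2 α β i j (x - z))
      = fun z : EuclideanSpace ℝ (Fin 2) =>
        α * c / 2 * Real.log (‖x - z‖ ^ 2)
          - β * (x - z) i * (x - z) j * (‖x - z‖ ^ 2)⁻¹ := by
    funext z
    simp only [kelvin2, ← hc]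
    rw [Real.log_pow, div_eq_mul_inv]
    ring
  rw [pd2, hfun, (show HasFDerivAt (fun z : EuclideanSpace ℝ (Fin 2) => α * c / 2 * Real.log (‖x - z‖ ^ 2) - β * (x - z) i * (x - z) j * (‖x - z‖ ^ 2)⁻¹) _ y from Hf).fderiv]
  simp only [ContinuousLinearMap.coe_smul', Pi.smul_apply, ContinuousLinearMap.coe_sub',
    Pi.sub_apply, ContinuousLinearMap.add_apply, ContinuousLinearMap.coe_smul,
    ContinuousLinearMap.smul_apply, innerSL_apply_apply, Pi.mul_apply, ContinuousLinearMap.neg_apply,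
    PiLp.proj_apply, smul_eq_mul, ContinuousLinearMap.coe_add', Pi.add_apply]
  have hinner : (inner ℝ (x - y) (EuclideanSpace.single k (1:ℝ)) : ℝ) = (x - y) k := by
    simp [EuclideanSpace.inner_single_right]
  have hsingle : ∀ t : Fin 2, (EuclideanSpace.single k (1:ℝ)) t = if t = k then (1:ℝ) else 0 := by
    intro t; simp [EuclideanSpace.single_apply, eq_comm]
  have hsub : ∀ t : Fin 2, (x - y) t = x t - y t := fun t => rfl
  simp only [PiLp.proj_apply, EuclideanSpace.single_apply]
  rw [hinner, hsub i, hsub j, hsub k]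
  have h4 : ‖x - y‖ ^ 4 = (‖x - y‖ ^ 2) ^ 2 := by ring
  rw [h4]
  set r : ℝ := ‖x - y‖ ^ 2 with hr
  clear_value r
  set a : ℝ := x i - y i with ha
  set b : ℝ := x j - y j with hb
  set d : ℝ := x k - y k with hd
  set p : ℝ := if i = k then (1:ℝ) else 0 with hp
  set q : ℝ := if j = k then (1:ℝ) else 0 with hq2
  clear_value a b d p q
  field_simp
  ring
end

section
/- Let λ₀, μ₀ ∈ ℝ with μ₀ > 0 and λ₀ + 2μ₀ > 0, and let Γ be the two-dimensional Kelvin matrix. Then for all x, y ∈ ℝ² with x ≠ y and each j ∈ {1,2}, the divergence in y of the j-th column of Γ(x−y) satisfies Σ_{i=1}^{2} ∂/∂y_i [ γ_{ij}(x−y) ] = −(1/(2π(λ₀+2μ₀)))·(x_j−y_j)/|x−y|². -/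
lemma proj_eval (k : Fin 2) (v : EuclideanSpace ℝ (Fin 2)) :
    (EuclideanSpace.proj k : EuclideanSpace ℝ (Fin 2) →L[ℝ] ℝ) v = v k := rfl

lemma key (α β : ℝ) (i j : Fin 2) (x y : EuclideanSpace ℝ (Fin 2)) (hxy : x ≠ y) :
    pd2 i (fun z => kelvin2 α β i j (x - z)) y =
      - α * (if i = j then (1:ℝ) else 0) * (x - y) i / ‖x - y‖ ^ 2
      + β * ((x - y) j + (if i = j then (1:ℝ) else 0) * (x - y) i) / ‖x - y‖ ^ 2
      - 2 * β * (x - y) i * (x - y) i * (x - y) j / (‖x - y‖ ^ 2) ^ 2 := by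
  have hw : x - y ≠ 0 := sub_ne_zero.mpr hxy
  have hn : ‖x - y‖ ^ 2 ≠ 0 := pow_ne_zero _ (norm_ne_zero_iff.mpr hw)
  have h1 : HasFDerivAt (fun z : EuclideanSpace ℝ (Fin 2) => x - z)
      (-(ContinuousLinearMap.id ℝ _)) y := (hasFDerivAt_id y).const_sub x
  have hnorm := h1.norm_sq
  have hci := (EuclideanSpace.proj i).hasFDerivAt.comp y h1
  have hcj := (EuclideanSpace.proj j).hasFDerivAt.comp y h1
  have hlog := hnorm.log hn
  have hinv := (hasFDerivAt_inv hn).comp y hnorm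
  have hF := (hlog.const_mul (α * (if i = j then (1:ℝ) else 0) * (1/2))).sub
      (((hci.const_mul β).mul hcj).mul hinv)
  have heq : (fun z => kelvin2 α β i j (x - z)) =
      (fun z => α * (if i = j then (1:ℝ) else 0) * (1/2) * Real.log (‖x - z‖ ^ 2)
        - (β * ((EuclideanSpace.proj i : EuclideanSpace ℝ (Fin 2) →L[ℝ] ℝ) ∘ fun z => x - z) z
            * (((EuclideanSpace.proj j : EuclideanSpace ℝ (Fin 2) →L[ℝ] ℝ) ∘ fun z => x - z) z))
          * ((fun t => t⁻¹) ∘ fun z => ‖x - z‖^2) z) := by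
    funext z
    simp only [kelvin2, Function.comp, proj_eval]
    rw [Real.log_pow]
    push_cast
    ring
  rw [pd2, heq]
  erw [hF.fderiv]
  have hinner : ∀ k : Fin 2, (inner ℝ (x - y) (EuclideanSpace.single k (1:ℝ)) : ℝ) = (x - y) k := by
    intro k
    rw [EuclideanSpace.inner_single_right]
    simp
  simp only [ContinuousLinearMap.sub_apply, ContinuousLinearMap.add_apply,
    ContinuousLinearMap.smul_apply, ContinuousLinearMap.comp_apply,
    ContinuousLinearMap.neg_apply, ContinuousLinearMap.id_apply,
    ContinuousLinearMap.coe_smul', Pi.smul_apply, innerSL_apply_apply, hinner,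
    ContinuousLinearMap.smulRight_apply, ContinuousLinearMap.one_apply,
    proj_eval, Function.comp, smul_eq_mul, two_smul, Pi.mul_apply, ContinuousLinearMap.toSpanSingleton_apply, inner_neg_right, WithLp.ofLp_neg, Pi.neg_apply, EuclideanSpace.single_apply, if_true]
  by_cases hij : i = j
  · subst hij
    simp only [if_pos rfl]
    field_simp
    ring
  · simp only [if_neg hij, if_neg (Ne.symm hij)]
    field_simp
    ring

theorem kelvin2_divergence
    (l0 m0 : ℝ) (hm : 0 < m0) (hl : 0 < l0 + 2 * m0)
    (α β : ℝ)
    (hα : α = (l0 + 3 * m0) / (4 * Real.pi * m0 * (l0 + 2 * m0)))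
    (hβ : β = (l0 + m0) / (4 * Real.pi * m0 * (l0 + 2 * m0)))
    (x y : EuclideanSpace ℝ (Fin 2)) (hxy : x ≠ y) (j : Fin 2) :
    ∑ i, pd2 i (fun z => kelvin2 α β i j (x - z)) y =
      -(1 / (2 * Real.pi * (l0 + 2 * m0))) * (x j - y j) / ‖x - y‖ ^ 2 := by
  have hw : x - y ≠ 0 := sub_ne_zero.mpr hxy
  have hn : ‖x - y‖ ^ 2 ≠ 0 := pow_ne_zero _ (norm_ne_zero_iff.mpr hw)
  have hpi : Real.pi ≠ 0 := Real.pi_ne_zero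
  have hm' : m0 ≠ 0 := ne_of_gt hm
  have hl' : l0 + 2 * m0 ≠ 0 := ne_of_gt hl
  have hsub : ∀ k : Fin 2, (x - y) k = x k - y k := fun k => rfl
  have hn2 : ‖x - y‖ ^ 2 = (x - y) 0 ^ 2 + (x - y) 1 ^ 2 := by
    rw [EuclideanSpace.norm_eq, Real.sq_sqrt (by positivity)]
    simp [Fin.sum_univ_two, Real.norm_eq_abs, sq_abs]
  have hβα : β - α = -(1 / (2 * Real.pi * (l0 + 2 * m0))) := by
    rw [hα, hβ]
    field_simp
    ring
  rw [Fin.sum_univ_two, key α β 0 j x y hxy, key α β 1 j x y hxy]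
  fin_cases j <;>
    simp only [Fin.zero_eta, Fin.mk_one, Fin.isValue, if_pos rfl, if_neg (by decide : ¬ (0 : Fin 2) = 1),
      if_neg (by decide : ¬ (1 : Fin 2) = 0), hsub, if_true] <;>
  · have hn2' : ‖x - y‖ ^ 2 = (x 0 - y 0) ^ 2 + (x 1 - y 1) ^ 2 := by
      rw [hn2, hsub 0, hsub 1]
    have hnz : (x 0 - y 0) ^ 2 + (x 1 - y 1) ^ 2 ≠ 0 := hn2' ▸ hn
    rw [← hβα, hn2']
    field_simp
    ring
end

section
/- Let Π be a real J×K matrix, let X₀ be a real K×M matrix, and set Y := Π·X₀. Let k be the number of nonzero rows of X₀ (rows that are not identically zero) and let r := rank(Y). Assume that every family of at most 2k − r + 1 columns of Π is linearly independent. Then any real K×M matrix X satisfying Π·X = Y and having at most k nonzero rows equals X₀. -/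
open Matrix

/-- `‖X‖₀` for a matrix: the number of rows containing a nonzero element. -/
noncomputable def rowSparsity {K M : ℕ} (X : Matrix (Fin K) (Fin M) ℝ) : ℕ :=
  {i : Fin K | X i ≠ 0}.ncard

open Classical in
lemma rowSparsity_eq_card {K M : ℕ} (X : Matrix (Fin K) (Fin M) ℝ) :
    rowSparsity X = (Finset.univ.filter (fun i => X i ≠ 0)).card := by
  classical
  rw [rowSparsity, ← Set.ncard_coe_finset]
  congr 1
  ext i
  simp

open Classical Module Submodule in
lemma matrix_rank_le_card_support {n m : ℕ} (Mx : Matrix (Fin n) (Fin m) ℝ) :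
    Mx.rank ≤ (Finset.univ.filter (fun i => Mx i ≠ 0)).card := by
  classical
  set T := Finset.univ.filter (fun i => Mx i ≠ 0) with hT
  rw [Matrix.rank_eq_finrank_span_row]
  have hle : span ℝ (Set.range Mx) ≤ span ℝ (Set.range (fun i : T => Mx i)) := by
    rw [span_le]
    rintro v ⟨i, rfl⟩
    by_cases h : Mx i = 0
    · rw [h]; exact zero_mem _
    · exact subset_span ⟨⟨i, by simp [hT, h]⟩, rfl⟩
  calc finrank ℝ (span ℝ (Set.range Mx))
      ≤ finrank ℝ (span ℝ (Set.range (fun i : T => Mx i))) := Submodule.finrank_mono hle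
    _ ≤ Fintype.card T := finrank_range_le_card _
    _ = T.card := Fintype.card_coe T

theorem mmv_spark_rank_uniqueness
    (J K M : ℕ) (A : Matrix (Fin J) (Fin K) ℝ)
    (X₀ : Matrix (Fin K) (Fin M) ℝ)
    (Y : Matrix (Fin J) (Fin M) ℝ) (hY : Y = A * X₀)
    (k : ℕ) (hk : k = rowSparsity X₀)
    (r : ℕ) (hr : r = Y.rank)
    (hcols : ∀ s : Finset (Fin K), (s.card : ℤ) ≤ 2 * (k : ℤ) - (r : ℤ) + 1 →
      LinearIndependent ℝ (fun j : s => Aᵀ (j : Fin K)))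
    (X : Matrix (Fin K) (Fin M) ℝ) (hX : A * X = Y) (hXk : rowSparsity X ≤ k) :
    X = X₀ := by
  classical
  set SX : Finset (Fin K) := Finset.univ.filter (fun i => X i ≠ 0) with hSX
  set SX0 : Finset (Fin K) := Finset.univ.filter (fun i => X₀ i ≠ 0) with hSX0
  set S : Finset (Fin K) := SX ∪ SX0 with hS
  set Z : Matrix (Fin K) (Fin M) ℝ := X - X₀ with hZdef
  -- rows of Z outside S vanish
  have hZrow : ∀ i : Fin K, i ∉ S → Z i = 0 := by
    intro i hi
    simp only [hS, Finset.mem_union, hSX, hSX0, Finset.mem_filter, Finset.mem_univ,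
      true_and, not_or, not_not] at hi
    funext m
    rw [hZdef, Matrix.sub_apply, congrFun hi.1 m, congrFun hi.2 m]
    simp
  have hAZ : A * Z = 0 := by
    rw [hZdef, Matrix.mul_sub, hX, ← hY, sub_self]
  have ha : SX.card ≤ k := by rwa [rowSparsity_eq_card] at hXk
  have hb : SX0.card = k := by rw [hk, rowSparsity_eq_card]
  have hrX : r ≤ X.rank := by
    rw [hr, ← hX]; exact Matrix.rank_mul_le_right A X
  have hrk : r ≤ k := by
    calc r = Y.rank := hr
      _ ≤ X₀.rank := by rw [hY]; exact Matrix.rank_mul_le_right A X₀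
      _ ≤ SX0.card := matrix_rank_le_card_support X₀
      _ = k := hb
  -- row-space bound: rank X ≤ rank Z + |SX ∩ SX0|
  have hXZ : X.rank ≤ Z.rank + (SX ∩ SX0).card := by
    rw [Matrix.rank_eq_finrank_span_row, Matrix.rank_eq_finrank_span_row]
    have hsub : Submodule.span ℝ (Set.range X) ≤
        Submodule.span ℝ (Set.range Z) ⊔
          Submodule.span ℝ (Set.range (fun i : (SX ∩ SX0 : Finset (Fin K)) => X i)) := by
      rw [Submodule.span_le]
      rintro v ⟨i, rfl⟩
      by_cases h0 : X₀ i = 0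
      · apply Submodule.mem_sup_left
        have hXi : X i = Z i := by
          funext m
          rw [hZdef, Matrix.sub_apply, congrFun h0 m]
          simp
        rw [hXi]
        exact Submodule.subset_span (Set.mem_range_self i)
      · by_cases h1 : X i = 0
        · rw [h1]; exact zero_mem _
        · apply Submodule.mem_sup_right
          apply Submodule.subset_span
          exact ⟨⟨i, by simp [hSX, hSX0, h1, h0]⟩, rfl⟩
    calc Module.finrank ℝ (Submodule.span ℝ (Set.range X))
        ≤ Module.finrank ℝ ↥(Submodule.span ℝ (Set.range Z) ⊔
            Submodule.span ℝ (Set.range (fun i : (SX ∩ SX0 : Finset (Fin K)) => X i))) :=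
          Submodule.finrank_mono hsub
      _ ≤ Module.finrank ℝ (Submodule.span ℝ (Set.range Z)) +
            Module.finrank ℝ (Submodule.span ℝ
              (Set.range (fun i : (SX ∩ SX0 : Finset (Fin K)) => X i))) :=
          Submodule.finrank_add_le_finrank_add_finrank _ _
      _ ≤ Module.finrank ℝ (Submodule.span ℝ (Set.range Z)) + (SX ∩ SX0).card := by
          gcongr
          calc Module.finrank ℝ (Submodule.span ℝ
                (Set.range (fun i : (SX ∩ SX0 : Finset (Fin K)) => X i)))
              ≤ Fintype.card (SX ∩ SX0 : Finset (Fin K)) := finrank_range_le_card _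
            _ = (SX ∩ SX0).card := Fintype.card_coe _
  -- submatrices
  set A' : Matrix (Fin J) {x // x ∈ S} ℝ := A.submatrix id (fun j => (j : Fin K)) with hA'
  set Z' : Matrix {x // x ∈ S} (Fin M) ℝ := Z.submatrix (fun i => (i : Fin K)) id with hZ'
  have hmul : A' * Z' = 0 := by
    ext j m
    have h1 : (A * Z) j m = 0 := by rw [hAZ]; rfl
    have h2 : (A' * Z') j m = ∑ i ∈ S, A j i * Z i m := by
      rw [Matrix.mul_apply]
      rw [← Finset.sum_coe_sort S (fun i => A j i * Z i m)]
      rfl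
    rw [Matrix.zero_apply, h2]
    rw [Matrix.mul_apply] at h1
    rw [← h1]
    apply Finset.sum_subset (Finset.subset_univ S)
    intro i _ hiS
    rw [congrFun (hZrow i hiS) m]
    simp
  have hkey : A'.rank + Z'.rank ≤ S.card := by
    have := Matrix.rank_add_rank_le_card_of_mul_eq_zero hmul
    rwa [Fintype.card_coe] at this
  -- rank Z = rank Z'
  have hspanZ : Submodule.span ℝ (Set.range Z) = Submodule.span ℝ (Set.range Z') := by
    apply le_antisymm
    · rw [Submodule.span_le]
      rintro v ⟨i, rfl⟩
      by_cases h : i ∈ S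
      · exact Submodule.subset_span ⟨⟨i, h⟩, rfl⟩
      · rw [hZrow i h]; exact zero_mem _
    · rw [Submodule.span_le]
      rintro v ⟨i, rfl⟩
      exact Submodule.subset_span ⟨(i : Fin K), rfl⟩
  have hZZ' : Z.rank = Z'.rank := by
    rw [Matrix.rank_eq_finrank_span_row, Matrix.rank_eq_finrank_span_row]
    exact congrArg (fun s : Submodule ℝ (Fin M → ℝ) => Module.finrank ℝ s) hspanZ
  -- lower bound on rank A'
  have hrA' : min S.card (2 * k - r + 1) ≤ A'.rank := by
    obtain ⟨T, hTS, hTcard⟩ :=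
      Finset.exists_subset_card_eq (s := S) (n := min S.card (2 * k - r + 1)) (min_le_left _ _)
    have hTle : (T.card : ℤ) ≤ 2 * (k : ℤ) - (r : ℤ) + 1 := by
      have h1 : T.card ≤ 2 * k - r + 1 := hTcard.le.trans (min_le_right _ _)
      have h2 : r ≤ 2 * k := by omega
      omega
    have hLI := hcols T hTle
    have hfr : Module.finrank ℝ
        (Submodule.span ℝ (Set.range (fun j : T => Aᵀ (j : Fin K)))) = T.card := by
      rw [finrank_span_eq_card hLI, Fintype.card_coe]
    have hle : Submodule.span ℝ (Set.range (fun j : T => Aᵀ (j : Fin K))) ≤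
        Submodule.span ℝ (Set.range A'ᵀ) := by
      rw [Submodule.span_le]
      rintro v ⟨j, rfl⟩
      apply Submodule.subset_span
      refine ⟨⟨(j : Fin K), hTS j.2⟩, ?_⟩
      funext i
      simp [hA', Matrix.transpose_apply]
    calc min S.card (2 * k - r + 1) = T.card := hTcard.symm
      _ = _ := hfr.symm
      _ ≤ Module.finrank ℝ (Submodule.span ℝ (Set.range A'ᵀ)) := Submodule.finrank_mono hle
      _ = A'.rank := (Matrix.rank_eq_finrank_span_cols A').symm
  -- cardinality identity
  have hcard : (SX ∩ SX0).card + S.card = SX.card + SX0.card := by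
    rw [hS, Finset.card_inter_add_card_union]
  -- conclude Z.rank = 0
  have hZ0 : Z.rank = 0 := by
    rcases le_total S.card (2 * k - r + 1) with h | h
    · rw [min_eq_left h] at hrA'
      omega
    · rw [min_eq_right h] at hrA'
      omega
  -- rank zero implies Z = 0
  have hZzero : Z = 0 := by
    rw [Matrix.rank_eq_finrank_span_row] at hZ0
    have hbot := Submodule.finrank_eq_zero.mp hZ0
    ext i m
    have hmem : Z i ∈ Submodule.span ℝ (Set.range Z.row) :=
      Submodule.subset_span (Set.mem_range_self i)
    rw [hbot, Submodule.mem_bot] at hmem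
    rw [congrFun hmem m]
    rfl
  have := sub_eq_zero.mp (hZdef ▸ hZzero)
  exact this
end
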